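/- Consider n ≥ 2 and 1 ≤ m ≤ n-1 and the train dynamics described by d_j(k) = max( d_{j-1}(k - b_j) + t_j , d_{j+1}(k - (1-b_{j+1})) + s_{j+1} ) with indices j modulo n, where b_j ∈ {0,1} with Σ_j b_j = m, and t_j, s_j > 0 are fixed. Suppose (h, v) ∈ ℝ × ℝⁿ satisfies the generalized eigenproblem v_j = max( v_{j-1} + t_j - b_j·h , v_{j+1} + s_{j+1} - (1-b_{j+1})·h ) for all j. Then h ≥ (Σ_j t_j)/m, h ≥ max_j (t_j + s_j), and h ≥ (Σ_j s_j)/(n-m). -/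
import Mathlib


open scoped BigOperators

/-- For the max-plus metro-line model on a ring of `n ≥ 2` segments with `m` trains
(`b j = 1` iff a train occupies segment `j` at time 0), any solution `(h, v)` of the
generalized eigenproblem satisfies the three cycle-mean lower bounds:
`h ≥ (Σ t_j)/m`, `h ≥ max_j (t_j + s_j)` and `h ≥ (Σ s_j)/(n-m)`. -/
theorem metro_eigenvalue_lower_bounds {n : ℕ} [NeZero n] (hn : 2 ≤ n)
    (m : ℕ) (hm1 : 1 ≤ m) (hm2 : m ≤ n - 1)
    (t s : Fin n → ℝ) (ht : ∀ j, 0 < t j) (hs : ∀ j, 0 < s j)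
    (b : Fin n → ℝ) (hb : ∀ j, b j = 0 ∨ b j = 1) (hbsum : ∑ j, b j = (m : ℝ))
    (h : ℝ) (v : Fin n → ℝ)
    (heig : ∀ j : Fin n,
      v j = max (v (j - 1) + t j - b j * h)
                (v (j + 1) + s (j + 1) - (1 - b (j + 1)) * h)) :
    (∑ j, t j) / (m : ℝ) ≤ h ∧
    Finset.univ.sup' Finset.univ_nonempty (fun j => t j + s j) ≤ h ∧
    (∑ j, s j) / ((n : ℝ) - (m : ℝ)) ≤ h := by
  have hA : ∀ j : Fin n, v (j - 1) + t j - b j * h ≤ v j := fun j =>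
    (heig j) ▸ le_max_left _ _
  have hB : ∀ j : Fin n, v (j + 1) + s (j + 1) - (1 - b (j + 1)) * h ≤ v j := fun j =>
    (heig j) ▸ le_max_right _ _
  have hmn : (m : ℝ) < (n : ℝ) := by
    have : m < n := lt_of_le_of_lt hm2 (Nat.sub_lt (by omega) one_pos)
    exact_mod_cast this
  have hm0 : (0 : ℝ) < (m : ℝ) := by exact_mod_cast hm1
  -- reindexing sums
  have hsub : ∑ j : Fin n, v (j - 1) = ∑ j, v j :=
    Fintype.sum_equiv (Equiv.subRight (1 : Fin n)) _ _ (fun j => rfl)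
  have hadd : ∑ j : Fin n, v (j + 1) = ∑ j, v j :=
    Fintype.sum_equiv (Equiv.addRight (1 : Fin n)) _ _ (fun j => rfl)
  have hsadd : ∑ j : Fin n, s (j + 1) = ∑ j, s j :=
    Fintype.sum_equiv (Equiv.addRight (1 : Fin n)) _ _ (fun j => rfl)
  have hbadd : ∑ j : Fin n, b (j + 1) = (m : ℝ) := by
    rw [Fintype.sum_equiv (Equiv.addRight (1 : Fin n)) (fun j => b (j + 1)) b (fun j => rfl)]
    exact hbsum
  refine ⟨?_, ?_, ?_⟩
  · -- h ≥ Σ t / m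
    have hsum : ∑ j : Fin n, (v (j - 1) + t j - b j * h) ≤ ∑ j, v j :=
      Finset.sum_le_sum fun j _ => hA j
    rw [div_le_iff₀ hm0]
    have : ∑ j : Fin n, (v (j - 1) + t j - b j * h)
        = (∑ j, v j) + (∑ j, t j) - (m : ℝ) * h := by
      rw [show (fun j : Fin n => v (j - 1) + t j - b j * h)
          = fun j => (v (j - 1) + t j) + (-h) * b j by funext j; ring]
      rw [Finset.sum_add_distrib, Finset.sum_add_distrib, ← Finset.mul_sum, hbsum, hsub]
      ring
    rw [this] at hsum
    linarith
  · -- h ≥ max (t j + s j)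
    apply Finset.sup'_le
    intro j _
    have h1 := hA j
    have h2 := hB (j - 1)
    rw [sub_add_cancel] at h2
    linarith
  · -- h ≥ Σ s / (n - m)
    have hsum : ∑ j : Fin n, (v (j + 1) + s (j + 1) - (1 - b (j + 1)) * h) ≤ ∑ j, v j :=
      Finset.sum_le_sum fun j _ => hB j
    rw [div_le_iff₀ (by linarith : (0 : ℝ) < (n : ℝ) - (m : ℝ))]
    have : ∑ j : Fin n, (v (j + 1) + s (j + 1) - (1 - b (j + 1)) * h)
        = (∑ j, v j) + (∑ j, s j) - ((n : ℝ) - (m : ℝ)) * h := by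
      rw [show (fun j : Fin n => v (j + 1) + s (j + 1) - (1 - b (j + 1)) * h)
          = fun j => (v (j + 1) + s (j + 1) - h) + h * b (j + 1) by funext j; ring]
      rw [Finset.sum_add_distrib, ← Finset.mul_sum, hbadd]
      rw [show (fun j : Fin n => v (j + 1) + s (j + 1) - h)
          = fun j => v (j + 1) + s (j + 1) + (-h) by funext j; ring]
      rw [Finset.sum_add_distrib, Finset.sum_add_distrib, hadd, hsadd,
        Finset.sum_const, Finset.card_univ, Fintype.card_fin]
      ring
    rw [this] at hsum
    linarith
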